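/- (Recovery of an optimal greedy policy.) Let κ > 0, let u* be the optimal value of min{ u ∈ ℝ : Σ_{a ∈ A} q_a^{-1}(u) ≤ κ }, set ξ*_a = q_a^{-1}(u*), and let C = { a ∈ A : q_a(ξ*_a) = u* }. Define d* ∈ ℝ^A as follows: (i) if there exists ā ∈ C with 0 ∈ ∂q_{ā}(ξ*_{ā}), let d* be the unit vector with d*_{ā} = 1 and d*_a = 0 otherwise; (ii) otherwise, choose any f_a ∈ ∂q_a(ξ*_a) for a ∈ C, set e_a = −1/f_a for a ∈ C and e_a = 0 for a ∉ C, and d*_a = e_a / Σ_{a'} e_{a'}. Then d* ∈ Δ^A, d* is optimal in max_{d ∈ Δ^A} min{ Σ_a d_a q_a(ξ_a) : ξ ≥ 0, Σ_a ξ_a ≤ κ }, and (d*, ξ*) is a saddle point of this max-min problem: Σ_a d*_a q_a(ξ_a) ≥ Σ_a d*_a q_a(ξ*_a) = u* ≥ Σ_a d_a q_a(ξ*_a) for every feasible ξ and every d ∈ Δ^A. Here ∂q_a(ξ) denotes the subdifferential of the convex function q_a at ξ. -/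

import Mathlib

open scoped Classical

section helpers
variable {S : Type*} [Fintype S]

lemma sInf_image_min' {α : Type*} {s : Set α} {f : α → ℝ} {x : α}
    (hx : x ∈ s) (hmin : ∀ y ∈ s, f x ≤ f y) : sInf (f '' s) = f x := by
  apply le_antisymm
  · exact csInf_le ⟨f x, by rintro _ ⟨y, hy, rfl⟩; exact hmin y hy⟩ ⟨x, hx, rfl⟩
  · exact le_csInf ⟨f x, x, hx, rfl⟩ (by rintro _ ⟨y, hy, rfl⟩; exact hmin y hy)

lemma exists_min_constrained
    (f g : (S → ℝ) → ℝ) (hf : Continuous f) (hg : Continuous g) (u : ℝ)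
    (hne : ∃ p ∈ stdSimplex ℝ S, g p ≤ u) :
    ∃ x ∈ stdSimplex ℝ S, g x ≤ u ∧ ∀ y ∈ stdSimplex ℝ S, g y ≤ u → f x ≤ f y := by
  have hK : IsCompact (stdSimplex ℝ S ∩ {p | g p ≤ u}) :=
    (isCompact_stdSimplex ℝ S).inter_right (isClosed_le hg continuous_const)
  obtain ⟨p0, hp0, hgp0⟩ := hne
  obtain ⟨x, hx, hmin⟩ := hK.exists_isMinOn ⟨p0, hp0, hgp0⟩ hf.continuousOn
  exact ⟨x, hx.1, hx.2, fun y hy hgy => hmin ⟨hy, hgy⟩⟩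

lemma nrm_nonneg' (w pb p : S → ℝ) (hw : ∀ i, 0 < w i) :
    0 ≤ ∑ i, w i * |p i - pb i| :=
  Finset.sum_nonneg fun i _ => mul_nonneg (hw i).le (abs_nonneg _)

lemma nrm_eq_zero' {w pb p : S → ℝ} (hw : ∀ i, 0 < w i)
    (h : ∑ i, w i * |p i - pb i| ≤ 0) : p = pb := by
  funext i
  have hterm : ∀ j ∈ Finset.univ, (0:ℝ) ≤ w j * |p j - pb j| :=
    fun j _ => mul_nonneg (hw j).le (abs_nonneg _)
  have hz := (Finset.sum_eq_zero_iff_of_nonneg hterm).mp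
    (le_antisymm h (Finset.sum_nonneg hterm))
  have hi := hz i (Finset.mem_univ i)
  have habs : |p i - pb i| = 0 := by
    rcases mul_eq_zero.mp hi with h' | h'
    · exact absurd h' (hw i).ne'
    · exact h'
  have := abs_eq_zero.mp habs; linarith

lemma nrm_combo' (w pb p p' : S → ℝ) (hw : ∀ i, 0 < w i) {t : ℝ} (ht0 : 0 ≤ t) (ht1 : t ≤ 1) :
    ∑ i, w i * |((1-t) * p i + t * p' i) - pb i| ≤
      (1-t) * ∑ i, w i * |p i - pb i| + t * ∑ i, w i * |p' i - pb i| := by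
  rw [Finset.mul_sum, Finset.mul_sum, ← Finset.sum_add_distrib]
  apply Finset.sum_le_sum
  intro i _
  have h1 : ((1-t) * p i + t * p' i) - pb i = (1-t)*(p i - pb i) + t*(p' i - pb i) := by ring
  rw [h1]
  have h2 : |(1-t)*(p i - pb i) + t*(p' i - pb i)| ≤ (1-t)*|p i - pb i| + t*|p' i - pb i| :=
    calc |(1-t)*(p i - pb i) + t*(p' i - pb i)|
        ≤ |(1-t)*(p i - pb i)| + |t*(p' i - pb i)| := abs_add_le _ _
      _ = (1-t)*|p i - pb i| + t*|p' i - pb i| := by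
          rw [abs_mul, abs_mul, abs_of_nonneg (by linarith : (0:ℝ) ≤ 1-t), abs_of_nonneg ht0]
  calc w i * |(1-t)*(p i - pb i) + t*(p' i - pb i)|
      ≤ w i * ((1-t)*|p i - pb i| + t*|p' i - pb i|) :=
        mul_le_mul_of_nonneg_left h2 (hw i).le
    _ = (1-t)*(w i * |p i - pb i|) + t*(w i * |p' i - pb i|) := by ring

lemma nrm_combo_self' (w pb p : S → ℝ) {t : ℝ} (ht0 : 0 ≤ t) (ht1 : t ≤ 1) :
    ∑ i, w i * |((1-t) * p i + t * pb i) - pb i| = (1-t) * ∑ i, w i * |p i - pb i| := by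
  rw [Finset.mul_sum]
  apply Finset.sum_congr rfl
  intro i _
  have h1 : ((1-t) * p i + t * pb i) - pb i = (1-t)*(p i - pb i) := by ring
  rw [h1, abs_mul, abs_of_nonneg (by linarith : (0:ℝ) ≤ 1-t)]; ring

lemma vl_combo' (z p p' : S → ℝ) (t : ℝ) :
    ∑ i, z i * ((1-t) * p i + t * p' i) =
      (1-t) * ∑ i, z i * p i + t * ∑ i, z i * p' i := by
  rw [Finset.mul_sum, Finset.mul_sum, ← Finset.sum_add_distrib]
  exact Finset.sum_congr rfl fun i _ => by ring

lemma combo_mem_simplex' {p p' : S → ℝ} (hp : p ∈ stdSimplex ℝ S) (hp' : p' ∈ stdSimplex ℝ S)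
    {t : ℝ} (ht0 : 0 ≤ t) (ht1 : t ≤ 1) :
    (fun i => (1-t) * p i + t * p' i) ∈ stdSimplex ℝ S := by
  have h := (convex_stdSimplex ℝ S) hp hp' (by linarith : (0:ℝ) ≤ 1 - t) ht0 (by ring)
  have heq : (fun i => (1-t) * p i + t * p' i) = (1-t) • p + t • p' := by
    funext i; simp [Pi.add_apply, Pi.smul_apply, smul_eq_mul]
  rw [heq]; exact h

lemma simplex_le_one' {p : S → ℝ} (hp : p ∈ stdSimplex ℝ S) (i : S) : p i ≤ 1 := by
  have h := Finset.single_le_sum (f := p) (fun j _ => hp.1 j) (Finset.mem_univ i)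
  rw [hp.2] at h; exact h

lemma vl_lb' (z p : S → ℝ) (hp : p ∈ stdSimplex ℝ S) :
    -(∑ i, |z i|) ≤ ∑ i, z i * p i := by
  rw [← Finset.sum_neg_distrib]
  apply Finset.sum_le_sum
  intro i _
  have h1 : |z i * p i| ≤ |z i| := by
    rw [abs_mul, abs_of_nonneg (hp.1 i)]
    calc |z i| * p i ≤ |z i| * 1 := mul_le_mul_of_nonneg_left (simplex_le_one' hp i) (abs_nonneg _)
      _ = |z i| := mul_one _
  linarith [neg_abs_le (z i * p i)]

end helpers

lemma nrm_continuous' {S : Type*} [Fintype S] (w pb : S → ℝ) :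
    Continuous (fun p : S → ℝ => ∑ i, w i * |p i - pb i|) :=
  continuous_finset_sum _ fun i _ =>
    continuous_const.mul ((continuous_apply i).sub continuous_const).abs

lemma vl_continuous' {S : Type*} [Fintype S] (z : S → ℝ) :
    Continuous (fun p : S → ℝ => ∑ i, z i * p i) :=
  continuous_finset_sum _ fun i _ => continuous_const.mul (continuous_apply i)


/-- Recovery of an optimal greedy policy. With `u*`, `ξ*` and
`C = {a : q_a(ξ*_a) = u*}` as in the bisection scheme, the vector `d*` constructed
from the subdifferentials of the `q_a` (case (i): a unit vector on some `ā ∈ C`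
with `0 ∈ ∂q_ā(ξ*_ā)`; case (ii): `d*_a ∝ −1/f_a` on `C` with `f_a ∈ ∂q_a(ξ*_a)`)
lies in `Δ^A`, is optimal in the max-min problem, and `(d*, ξ*)` is a saddle
point. -/
theorem optimal_greedy_policy_recovery
    {S A : Type*} [Fintype S] [Nonempty S] [Fintype A] [Nonempty A] [DecidableEq A]
    (z : A → S → ℝ) (pbar : A → S → ℝ) (hpbar : ∀ a, pbar a ∈ stdSimplex ℝ S)
    (w : A → S → ℝ) (hw : ∀ a i, 0 < w a i)
    (κ : ℝ) (hκ : 0 < κ)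
    (q : A → ℝ → ℝ)
    (hq : ∀ (a : A) (ξ : ℝ), q a ξ =
      sInf ((fun p : S → ℝ => ∑ i, z a i * p i) ''
        {p | p ∈ stdSimplex ℝ S ∧ ∑ i, w a i * |p i - pbar a i| ≤ ξ}))
    (qinv : A → ℝ → ℝ)
    (hqinv : ∀ (a : A) (u : ℝ), qinv a u =
      sInf ((fun p : S → ℝ => ∑ i, w a i * |p i - pbar a i|) ''
        {p | p ∈ stdSimplex ℝ S ∧ ∑ i, z a i * p i ≤ u}))
    (ustar : ℝ)
    (hustar : IsLeast {u : ℝ |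
        (∀ a, ∃ p ∈ stdSimplex ℝ S, ∑ i, z a i * p i ≤ u) ∧
        ∑ a, qinv a u ≤ κ} ustar)
    (ξstar : A → ℝ) (hξstar : ∀ a, ξstar a = qinv a ustar)
    (C : Set A) (hC : C = {a : A | q a (ξstar a) = ustar})
    -- subdifferential of the convex function `q a` on `[0,∞)` at `ξ`
    (subdiff : A → ℝ → Set ℝ)
    (hsubdiff : ∀ (a : A) (ξ : ℝ), subdiff a ξ =
      {g : ℝ | ∀ η : ℝ, 0 ≤ η → q a ξ + g * (η - ξ) ≤ q a η})
    (Ξ : Set (A → ℝ))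
    (hΞ : Ξ = {ξ : A → ℝ | (∀ a, 0 ≤ ξ a) ∧ ∑ a, ξ a ≤ κ})
    (dstar : A → ℝ)
    (hdstar :
      -- case (i)
      (∃ abar ∈ C, 0 ∈ subdiff abar (ξstar abar) ∧
        dstar = fun a => if a = abar then (1 : ℝ) else 0) ∨
      -- case (ii)
      ((∀ a ∈ C, 0 ∉ subdiff a (ξstar a)) ∧
        ∃ f : A → ℝ, (∀ a ∈ C, f a ∈ subdiff a (ξstar a)) ∧
          dstar = fun a =>
            (if a ∈ C then -(1 / f a) else 0) /
              (∑ a', if a' ∈ C then -(1 / f a') else 0))) :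
    dstar ∈ stdSimplex ℝ A ∧
    -- d* is optimal in the max-min problem
    sInf ((fun ξ : A → ℝ => ∑ a, dstar a * q a (ξ a)) '' Ξ) = ustar ∧
    (∀ d ∈ stdSimplex ℝ A,
      sInf ((fun ξ : A → ℝ => ∑ a, d a * q a (ξ a)) '' Ξ) ≤ ustar) ∧
    -- (d*, ξ*) is a saddle point
    (∀ ξ ∈ Ξ, ∑ a, dstar a * q a (ξstar a) ≤ ∑ a, dstar a * q a (ξ a)) ∧
    (∑ a, dstar a * q a (ξstar a)) = ustar ∧
    (∀ d ∈ stdSimplex ℝ A, ∑ a, d a * q a (ξstar a) ≤ ustar) := by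
  -- basic bddness of the q-defining sets
  have hQbdd : ∀ (a : A) (ξ : ℝ),
      BddBelow ((fun p : S → ℝ => ∑ i, z a i * p i) ''
        {p | p ∈ stdSimplex ℝ S ∧ ∑ i, w a i * |p i - pbar a i| ≤ ξ}) := by
    intro a ξ
    exact ⟨-(∑ i, |z a i|), by rintro _ ⟨p, hp, rfl⟩; exact vl_lb' (z a) p hp.1⟩
  have hpbarQ : ∀ (a : A) (ξ : ℝ), 0 ≤ ξ →
      pbar a ∈ {p : S → ℝ | p ∈ stdSimplex ℝ S ∧ ∑ i, w a i * |p i - pbar a i| ≤ ξ} := by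
    intro a ξ hξ
    refine ⟨hpbar a, ?_⟩
    simpa using hξ
  -- q is ≤ value at any feasible point
  have hq_le : ∀ (a : A) (ξ : ℝ) (p : S → ℝ), p ∈ stdSimplex ℝ S →
      (∑ i, w a i * |p i - pbar a i|) ≤ ξ → q a ξ ≤ ∑ i, z a i * p i := by
    intro a ξ p hp hn
    rw [hq]
    exact csInf_le (hQbdd a ξ) ⟨p, ⟨hp, hn⟩, rfl⟩
  -- q is ≥ any lower bound of values
  have hq_ge : ∀ (a : A) (ξ : ℝ), 0 ≤ ξ → ∀ (c : ℝ),
      (∀ p ∈ stdSimplex ℝ S, c ≤ ∑ i, z a i * p i) → c ≤ q a ξ := by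
    intro a ξ hξ c hc
    rw [hq]
    exact le_csInf (Set.Nonempty.image _ ⟨pbar a, hpbarQ a ξ hξ⟩)
      (by rintro _ ⟨p, hp, rfl⟩; exact hc p hp.1)
  -- q is nonincreasing
  have hq_mono : ∀ (a : A) (ξ η : ℝ), 0 ≤ ξ → ξ ≤ η → q a η ≤ q a ξ := by
    intro a ξ η hξ hle
    rw [hq, hq]
    apply csInf_le_csInf (hQbdd a η) (Set.Nonempty.image _ ⟨pbar a, hpbarQ a ξ hξ⟩)
    apply Set.image_mono
    rintro p ⟨hp, hn⟩
    exact ⟨hp, hn.trans hle⟩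
  -- attainment of qinv at ustar
  have hPstar : ∀ a : A, ∃ p ∈ stdSimplex ℝ S, (∑ i, z a i * p i) ≤ ustar ∧
      (∑ i, w a i * |p i - pbar a i|) = ξstar a := by
    intro a
    obtain ⟨x, hx, hgx, hmin⟩ := exists_min_constrained
      (fun p : S → ℝ => ∑ i, w a i * |p i - pbar a i|)
      (fun p : S → ℝ => ∑ i, z a i * p i)
      (nrm_continuous' (w a) (pbar a)) (vl_continuous' (z a)) ustar (hustar.1.1 a)
    refine ⟨x, hx, hgx, ?_⟩
    rw [hξstar, hqinv]
    exact (sInf_image_min' (s := {p | p ∈ stdSimplex ℝ S ∧ ∑ i, z a i * p i ≤ ustar})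
      (f := fun p => ∑ i, w a i * |p i - pbar a i|) (x := x)
      ⟨hx, hgx⟩ (fun y hy => hmin y hy.1 hy.2)).symm
  choose pstar hpstar1 hpstar2 hpstar3 using hPstar
  have hξ_nonneg : ∀ a, 0 ≤ ξstar a := by
    intro a; rw [← hpstar3 a]; exact nrm_nonneg' _ _ _ (hw a)
  have hqξ_le : ∀ a, q a (ξstar a) ≤ ustar := by
    intro a
    exact (hq_le a (ξstar a) (pstar a) (hpstar1 a) (le_of_eq (hpstar3 a))).trans (hpstar2 a)
  have hsumξ : ∑ a, ξstar a ≤ κ := by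
    calc ∑ a, ξstar a = ∑ a, qinv a ustar := by simp [hξstar]
      _ ≤ κ := hustar.1.2
  have hξΞ : ξstar ∈ Ξ := by rw [hΞ]; exact ⟨hξ_nonneg, hsumξ⟩
  -- off C, ξstar vanishes
  have hqinv_bdd : ∀ (a : A) (u : ℝ),
      BddBelow ((fun p : S → ℝ => ∑ i, w a i * |p i - pbar a i|) ''
        {p | p ∈ stdSimplex ℝ S ∧ ∑ i, z a i * p i ≤ u}) := by
    intro a u
    exact ⟨0, by rintro _ ⟨p, hp, rfl⟩; exact nrm_nonneg' _ _ _ (hw a)⟩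
  have hnotC : ∀ a, a ∉ C → ξstar a = 0 := by
    intro a ha
    by_contra hne0
    have hξpos : 0 < ξstar a := lt_of_le_of_ne (hξ_nonneg a) (Ne.symm hne0)
    have hqlt : q a (ξstar a) < ustar := by
      refine lt_of_le_of_ne (hqξ_le a) ?_
      rw [hC] at ha; exact ha
    have hlt : sInf ((fun p : S → ℝ => ∑ i, z a i * p i) ''
        {p | p ∈ stdSimplex ℝ S ∧ ∑ i, w a i * |p i - pbar a i| ≤ ξstar a}) < ustar := by
      rw [← hq]; exact hqlt
    obtain ⟨v, hv, hvlt⟩ := exists_lt_of_csInf_lt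
      (Set.Nonempty.image _ ⟨pbar a, hpbarQ a _ (hξ_nonneg a)⟩) hlt
    obtain ⟨p', hp', rfl⟩ := hv
    obtain ⟨hp's, hp'n⟩ := hp'
    set B : ℝ := (∑ i, z a i * pbar a i) - (∑ i, z a i * p' i) with hB
    set ε : ℝ := ustar - (∑ i, z a i * p' i) with hε
    have hεpos : 0 < ε := by simp only [hε]; linarith
    set t : ℝ := min (1/2) (ε / (|B| + 1)) with ht
    have hBnn : (0:ℝ) ≤ |B| := abs_nonneg _
    have ht0 : 0 < t := lt_min (by norm_num) (div_pos hεpos (by linarith))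
    have ht1 : t ≤ 1 := le_trans (min_le_left _ _) (by norm_num)
    have htB : t * B ≤ ε := by
      have h1 : t ≤ ε / (|B| + 1) := min_le_right _ _
      have h2 : t * B ≤ t * |B| := mul_le_mul_of_nonneg_left (le_abs_self B) ht0.le
      have h3 : t * |B| ≤ (ε / (|B| + 1)) * |B| := mul_le_mul_of_nonneg_right h1 hBnn
      have h4 : (ε / (|B| + 1)) * |B| ≤ ε := by
        rw [div_mul_eq_mul_div, div_le_iff₀ (by linarith)]
        nlinarith
      linarith
    set pt : S → ℝ := fun i => (1 - t) * p' i + t * pbar a i with hpt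
    have hpts : pt ∈ stdSimplex ℝ S := combo_mem_simplex' hp's (hpbar a) ht0.le ht1
    have hptv : (∑ i, z a i * pt i) ≤ ustar := by
      have := vl_combo' (z a) p' (pbar a) t
      simp only [hpt]
      rw [this]
      have : (1 - t) * (∑ i, z a i * p' i) + t * (∑ i, z a i * pbar a i)
          = (∑ i, z a i * p' i) + t * B := by simp only [hB]; ring
      rw [this]
      simp only [hε] at htB ⊢
      linarith
    have hptn : (∑ i, w a i * |pt i - pbar a i|) ≤ (1 - t) * ξstar a := by
      have := nrm_combo_self' (w a) (pbar a) p' ht0.le ht1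
      simp only [hpt]
      rw [this]
      have h1t : (0:ℝ) ≤ 1 - t := by linarith
      exact mul_le_mul_of_nonneg_left hp'n h1t
    have hcon : ξstar a ≤ (1 - t) * ξstar a := by
      calc ξstar a = qinv a ustar := hξstar a
        _ ≤ ∑ i, w a i * |pt i - pbar a i| := by
            rw [hqinv]
            exact csInf_le (hqinv_bdd a ustar) ⟨pt, ⟨hpts, hptv⟩, rfl⟩
        _ ≤ (1 - t) * ξstar a := hptn
    nlinarith
  -- C is nonempty
  have hCne : C.Nonempty := by
    by_contra hemp
    have hall : ∀ a, a ∉ C := fun a ha => hemp ⟨a, ha⟩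
    have hq0 : ∀ a, q a 0 = ∑ i, z a i * pbar a i := by
      intro a
      rw [hq]
      apply sInf_image_min' (hpbarQ a 0 le_rfl)
      intro y hy
      have hy2 : y = pbar a := nrm_eq_zero' (hw a) hy.2
      rw [hy2]
    set u0 : ℝ := Finset.univ.sup' Finset.univ_nonempty (fun a : A => q a 0) with hu0
    have hu0lt : u0 < ustar := by
      rw [hu0, Finset.sup'_lt_iff]
      intro a _
      have := hnotC a (hall a)
      calc q a 0 = q a (ξstar a) := by rw [this]
        _ < ustar := lt_of_le_of_ne (hqξ_le a) (hall a ∘ (by rw [hC]; exact fun h => h))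
    have hq0le : ∀ a, q a 0 ≤ u0 := by
      intro a; rw [hu0]; exact Finset.le_sup' (fun a : A => q a 0) (Finset.mem_univ a)
    have humem : u0 ∈ {u : ℝ | (∀ a, ∃ p ∈ stdSimplex ℝ S, ∑ i, z a i * p i ≤ u) ∧
        ∑ a, qinv a u ≤ κ} := by
      constructor
      · intro a
        exact ⟨pbar a, hpbar a, by rw [← hq0 a]; exact hq0le a⟩
      · have hqi : ∀ a, qinv a u0 ≤ 0 := by
          intro a
          rw [hqinv]
          have hm : pbar a ∈ {p : S → ℝ | p ∈ stdSimplex ℝ S ∧ ∑ i, z a i * p i ≤ u0} :=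
            ⟨hpbar a, by rw [← hq0 a]; exact hq0le a⟩
          have := csInf_le (hqinv_bdd a u0) ⟨pbar a, hm, rfl⟩
          simpa using this
        calc ∑ a, qinv a u0 ≤ ∑ a : A, (0:ℝ) := Finset.sum_le_sum fun a _ => hqi a
          _ = 0 := by simp
          _ ≤ κ := hκ.le
    exact absurd (hustar.2 humem) (not_le.mpr hu0lt)
  -- support of dstar is in C, dstar ∈ simplex, key minimization property
  have hmain : (∀ a, a ∉ C → dstar a = 0) ∧ dstar ∈ stdSimplex ℝ A ∧
      (∀ ξ ∈ Ξ, ∑ a, dstar a * q a (ξstar a) ≤ ∑ a, dstar a * q a (ξ a)) := by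
    rcases hdstar with ⟨abar, habar, h0, hdef⟩ | ⟨h0, f, hf, hdef⟩
    · -- case (i)
      have hsupp : ∀ a, a ∉ C → dstar a = 0 := by
        intro a ha
        rw [hdef]
        simp only
        rw [if_neg]
        intro h; rw [h] at ha; exact ha habar
      have hind : ∀ g : A → ℝ, ∑ a, dstar a * g a = g abar := by
        intro g
        rw [hdef]
        simp only
        simp only [ite_mul, one_mul, zero_mul]
        simp [Finset.sum_ite_eq']
      refine ⟨hsupp, ⟨?_, ?_⟩, ?_⟩
      · intro a; rw [hdef]; dsimp only; split <;> norm_num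
      · have := hind (fun _ => (1:ℝ))
        simpa using this
      · intro ξ hξmem
        rw [hΞ] at hξmem
        rw [hind (fun a => q a (ξstar a)), hind (fun a => q a (ξ a))]
        rw [hsubdiff] at h0
        have := h0 (ξ abar) (hξmem.1 abar)
        simpa using this
    · -- case (ii)
      have hf_neg : ∀ a ∈ C, f a < 0 := by
        intro a ha
        have hfa := hf a ha
        rw [hsubdiff] at hfa
        have h1 := hfa (ξstar a + 1) (by linarith [hξ_nonneg a])
        have h2 : q a (ξstar a + 1) ≤ q a (ξstar a) :=
          hq_mono a _ _ (hξ_nonneg a) (by linarith)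
        have hle : f a ≤ 0 := by nlinarith
        refine lt_of_le_of_ne hle ?_
        intro hfz
        exact h0 a ha (hfz ▸ hf a ha)
      set e : A → ℝ := fun a => if a ∈ C then -(1 / f a) else 0 with he
      have he_nn : ∀ a, 0 ≤ e a := by
        intro a
        rw [he]; dsimp only
        split
        · next ha =>
          have := hf_neg a ha
          have : 1 / f a < 0 := one_div_neg.mpr this
          linarith
        · exact le_rfl
      have hEpos : 0 < ∑ a', e a' := by
        obtain ⟨a0, ha0⟩ := hCne
        apply Finset.sum_pos' (fun a _ => he_nn a)
        refine ⟨a0, Finset.mem_univ a0, ?_⟩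
        rw [he]; dsimp only
        rw [if_pos ha0]
        have : 1 / f a0 < 0 := one_div_neg.mpr (hf_neg a0 ha0)
        linarith
      have hdeq : ∀ a, dstar a = e a / ∑ a', e a' := by
        intro a; rw [hdef]
      have hsupp : ∀ a, a ∉ C → dstar a = 0 := by
        intro a ha
        rw [hdeq a, he]; dsimp only
        rw [if_neg ha, zero_div]
      have hd_nn : ∀ a, 0 ≤ dstar a := by
        intro a; rw [hdeq a]; exact div_nonneg (he_nn a) hEpos.le
      have hd_sum : ∑ a, dstar a = 1 := by
        rw [Finset.sum_congr rfl (fun a _ => hdeq a), ← Finset.sum_div,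
          div_self hEpos.ne']
      -- minimum over whole simplex
      have hPmin : ∀ a : A, ∃ p ∈ stdSimplex ℝ S,
          ∀ y ∈ stdSimplex ℝ S, (∑ i, z a i * p i) ≤ ∑ i, z a i * y i := by
        intro a
        obtain ⟨x, hx, _, hmin⟩ := exists_min_constrained
          (fun p : S → ℝ => ∑ i, z a i * p i)
          (fun _ : S → ℝ => (0:ℝ)) (vl_continuous' (z a)) continuous_const 0
          ⟨pbar a, hpbar a, le_rfl⟩
        exact ⟨x, hx, fun y hy => hmin y hy le_rfl⟩
      choose pmin hpmin1 hpmin2 using hPmin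
      set m : A → ℝ := fun a => ∑ i, z a i * pmin a i with hm
      have hm_le_q : ∀ (a : A) (ξ : ℝ), 0 ≤ ξ → m a ≤ q a ξ := by
        intro a ξ hξ
        exact hq_ge a ξ hξ (m a) (fun p hp => hpmin2 a p hp)
      have hm_lt : ∀ a, m a < ustar := by
        intro a
        have hle : m a ≤ ustar := (hm_le_q a _ (hξ_nonneg a)).trans (hqξ_le a)
        refine lt_of_le_of_ne hle ?_
        intro heq
        have haC : a ∈ C := by
          rw [hC]
          exact le_antisymm (hqξ_le a) (heq ▸ hm_le_q a _ (hξ_nonneg a))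
        apply h0 a haC
        rw [hsubdiff]
        intro η hη
        have h1 : m a ≤ q a η := hm_le_q a η hη
        have h2 : q a (ξstar a) ≤ ustar := hqξ_le a
        simp only [zero_mul, add_zero]
        linarith
      -- the budget is saturated
      have hsum_eq : ∑ a, ξstar a = κ := by
        by_contra hne
        have hlt : ∑ a, ξstar a < κ := lt_of_le_of_ne hsumξ hne
        set δ : ℝ := κ - ∑ a, ξstar a with hδ
        have hδpos : 0 < δ := by rw [hδ]; linarith
        set M : A → ℝ := fun a => ∑ i, w a i * |pmin a i - pbar a i| with hM
        have hMnn : ∀ a, 0 ≤ M a := fun a => nrm_nonneg' _ _ _ (hw a)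
        have hMsum : 0 ≤ ∑ a, M a := Finset.sum_nonneg fun a _ => hMnn a
        set ε : ℝ := Finset.univ.inf' Finset.univ_nonempty (fun a : A => ustar - m a)
          with hε
        have hεpos : 0 < ε := by
          rw [hε, Finset.lt_inf'_iff]
          intro a _
          linarith [hm_lt a]
        have hεle : ∀ a, ε ≤ ustar - m a := by
          intro a; rw [hε]
          exact Finset.inf'_le _ (Finset.mem_univ a)
        set t : ℝ := min 1 (δ / (∑ a, M a + 1)) with htdef
        have ht0 : 0 < t := lt_min one_pos (div_pos hδpos (by linarith))
        have ht1 : t ≤ 1 := min_le_left _ _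
        have htM : t * (∑ a, M a) ≤ δ := by
          have h1 : t ≤ δ / (∑ a, M a + 1) := min_le_right _ _
          have h3 : t * (∑ a, M a) ≤ (δ / (∑ a, M a + 1)) * (∑ a, M a) :=
            mul_le_mul_of_nonneg_right h1 hMsum
          have h4 : (δ / (∑ a, M a + 1)) * (∑ a, M a) ≤ δ := by
            rw [div_mul_eq_mul_div, div_le_iff₀ (by linarith)]
            nlinarith
          linarith
        set u : ℝ := ustar - t * ε with hu
        have hult : u < ustar := by
          rw [hu]
          nlinarith
        have hpt : ∀ a, ∃ p ∈ stdSimplex ℝ S, (∑ i, z a i * p i ≤ u) ∧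
            (∑ i, w a i * |p i - pbar a i|) ≤ ξstar a + t * M a := by
          intro a
          refine ⟨fun i => (1 - t) * pstar a i + t * pmin a i,
            combo_mem_simplex' (hpstar1 a) (hpmin1 a) ht0.le ht1, ?_, ?_⟩
          · rw [vl_combo' (z a) (pstar a) (pmin a) t]
            have h1 : (1 - t) * (∑ i, z a i * pstar a i) ≤ (1 - t) * ustar :=
              mul_le_mul_of_nonneg_left (hpstar2 a) (by linarith)
            have h2 : ε ≤ ustar - m a := hεle a
            have h3 : t * (∑ i, z a i * pmin a i) = t * m a := by rw [hm]
            rw [hu]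
            nlinarith
          · have hcb := nrm_combo' (w a) (pbar a) (pstar a) (pmin a) (hw a) ht0.le ht1
            rw [hpstar3 a] at hcb
            have h1 : (1 - t) * ξstar a ≤ ξstar a := by nlinarith [hξ_nonneg a]
            have h2 : t * (∑ i, w a i * |pmin a i - pbar a i|) = t * M a := by rw [hM]
            calc (∑ i, w a i * |((1 - t) * pstar a i + t * pmin a i) - pbar a i|)
                ≤ (1 - t) * ξstar a + t * (∑ i, w a i * |pmin a i - pbar a i|) := hcb
              _ ≤ ξstar a + t * M a := by rw [h2]; linarith
        have humem : u ∈ {u : ℝ | (∀ a, ∃ p ∈ stdSimplex ℝ S, ∑ i, z a i * p i ≤ u) ∧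
            ∑ a, qinv a u ≤ κ} := by
          constructor
          · intro a
            obtain ⟨p, hp, hv, _⟩ := hpt a
            exact ⟨p, hp, hv⟩
          · have hqi : ∀ a, qinv a u ≤ ξstar a + t * M a := by
              intro a
              obtain ⟨p, hp, hv, hn⟩ := hpt a
              rw [hqinv]
              exact (csInf_le (hqinv_bdd a u) ⟨p, ⟨hp, hv⟩, rfl⟩).trans hn
            calc ∑ a, qinv a u ≤ ∑ a, (ξstar a + t * M a) :=
                  Finset.sum_le_sum fun a _ => hqi a
              _ = (∑ a, ξstar a) + t * ∑ a, M a := by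
                  rw [Finset.sum_add_distrib, Finset.mul_sum]
              _ ≤ (∑ a, ξstar a) + δ := by linarith
              _ = κ := by rw [hδ]; ring
        exact absurd (hustar.2 humem) (not_le.mpr hult)
      -- assemble case (ii)
      refine ⟨hsupp, ⟨hd_nn, hd_sum⟩, ?_⟩
      intro ξ hξmem
      rw [hΞ] at hξmem
      -- termwise subgradient inequality
      have hterm : ∀ a, dstar a * q a (ξstar a) + dstar a * f a * (ξ a - ξstar a)
          ≤ dstar a * q a (ξ a) := by
        intro a
        by_cases ha : a ∈ C
        · have hfa := hf a ha
          rw [hsubdiff] at hfa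
          have h1 := hfa (ξ a) (hξmem.1 a)
          have h2 : dstar a * (q a (ξstar a) + f a * (ξ a - ξstar a))
              ≤ dstar a * q a (ξ a) := mul_le_mul_of_nonneg_left h1 (hd_nn a)
          nlinarith [hd_nn a]
        · rw [hsupp a ha]; simp
      -- the correction term is nonnegative
      have hcorr : 0 ≤ ∑ a, dstar a * f a * (ξ a - ξstar a) := by
        have heval : ∀ a, dstar a * f a * (ξ a - ξstar a)
            = -(1 / ∑ a', e a') * (if a ∈ C then ξ a - ξstar a else 0) := by
          intro a
          by_cases ha : a ∈ C
          · rw [if_pos ha, hdeq a, he]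
            dsimp only
            rw [if_pos ha]
            have hfne : f a ≠ 0 := (hf_neg a ha).ne
            have h1 : -(1 / f a) * f a = -1 := by
              rw [neg_mul, one_div, inv_mul_cancel₀ hfne]
            calc -(1 / f a) / (∑ a', e a') * f a * (ξ a - ξstar a)
                = (-(1 / f a) * f a) / (∑ a', e a') * (ξ a - ξstar a) := by ring
              _ = -(1 / ∑ a', e a') * (ξ a - ξstar a) := by rw [h1]; ring
          · rw [if_neg ha, hsupp a ha]; ring
        rw [Finset.sum_congr rfl (fun a _ => heval a), ← Finset.mul_sum]
        have hT : (∑ a, if a ∈ C then ξ a - ξstar a else 0) ≤ 0 := by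
          have hsplit : (∑ a, if a ∈ C then ξ a - ξstar a else 0)
              = (∑ a, if a ∈ C then ξ a else 0) - ∑ a, ξstar a := by
            rw [← Finset.sum_sub_distrib]
            apply Finset.sum_congr rfl
            intro a _
            by_cases ha : a ∈ C
            · rw [if_pos ha, if_pos ha]
            · rw [if_neg ha, if_neg ha, hnotC a ha]; ring
          rw [hsplit, hsum_eq]
          have h1 : (∑ a, if a ∈ C then ξ a else 0) ≤ ∑ a, ξ a := by
            apply Finset.sum_le_sum
            intro a _
            by_cases ha : a ∈ C
            · rw [if_pos ha]
            · rw [if_neg ha]; exact hξmem.1 a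
          linarith [hξmem.2]
        have hneg : -(1 / ∑ a', e a') ≤ 0 := by
          have : 0 < 1 / ∑ a', e a' := one_div_pos.mpr hEpos
          linarith
        have := mul_nonneg (neg_nonneg.mpr hneg) (neg_nonneg.mpr hT)
        calc (0:ℝ) ≤ (-(-(1 / ∑ a', e a'))) * (-(∑ a, if a ∈ C then ξ a - ξstar a else 0)) := this
          _ = -(1 / ∑ a', e a') * (∑ a, if a ∈ C then ξ a - ξstar a else 0) := by ring
      calc ∑ a, dstar a * q a (ξstar a)
          ≤ (∑ a, dstar a * q a (ξstar a)) + ∑ a, dstar a * f a * (ξ a - ξstar a) := by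
            linarith
        _ = ∑ a, (dstar a * q a (ξstar a) + dstar a * f a * (ξ a - ξstar a)) := by
            rw [Finset.sum_add_distrib]
        _ ≤ ∑ a, dstar a * q a (ξ a) := Finset.sum_le_sum fun a _ => hterm a
  obtain ⟨hsupp, hd_simplex, hkey⟩ := hmain
  -- value at saddle
  have hval : (∑ a, dstar a * q a (ξstar a)) = ustar := by
    have h1 : ∀ a, dstar a * q a (ξstar a) = dstar a * ustar := by
      intro a
      by_cases ha : a ∈ C
      · rw [hC] at ha; rw [ha]
      · rw [hsupp a ha]; ring
    calc ∑ a, dstar a * q a (ξstar a) = ∑ a, dstar a * ustar := by simp [h1]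
      _ = (∑ a, dstar a) * ustar := by rw [← Finset.sum_mul]
      _ = ustar := by rw [hd_simplex.2, one_mul]
  -- any d gives value ≤ ustar at ξstar
  have hdle : ∀ d ∈ stdSimplex ℝ A, ∑ a, d a * q a (ξstar a) ≤ ustar := by
    intro d hd
    calc ∑ a, d a * q a (ξstar a) ≤ ∑ a, d a * ustar :=
          Finset.sum_le_sum fun a _ => mul_le_mul_of_nonneg_left (hqξ_le a) (hd.1 a)
      _ = (∑ a, d a) * ustar := by rw [← Finset.sum_mul]
      _ = ustar := by rw [hd.2, one_mul]
  -- sInf over Ξ of any simplex weighting is ≤ ustar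
  have hsinf_le : ∀ d ∈ stdSimplex ℝ A,
      sInf ((fun ξ : A → ℝ => ∑ a, d a * q a (ξ a)) '' Ξ) ≤ ustar := by
    intro d hd
    have hbdd : BddBelow ((fun ξ : A → ℝ => ∑ a, d a * q a (ξ a)) '' Ξ) := by
      refine ⟨-(∑ a, ∑ i, |z a i|), ?_⟩
      rintro _ ⟨ξ, hξ, rfl⟩
      rw [hΞ] at hξ
      rw [← Finset.sum_neg_distrib]
      apply Finset.sum_le_sum
      intro a _
      have hB : (0:ℝ) ≤ ∑ i, |z a i| := Finset.sum_nonneg fun i _ => abs_nonneg _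
      have hqa : -(∑ i, |z a i|) ≤ q a (ξ a) :=
        hq_ge a (ξ a) (hξ.1 a) _ (fun p hp => vl_lb' (z a) p hp)
      have hd1 : d a ≤ 1 := simplex_le_one' hd a
      nlinarith [hd.1 a]
    calc sInf ((fun ξ : A → ℝ => ∑ a, d a * q a (ξ a)) '' Ξ)
        ≤ ∑ a, d a * q a (ξstar a) := csInf_le hbdd ⟨ξstar, hξΞ, rfl⟩
      _ ≤ ustar := hdle d hd
  refine ⟨hd_simplex, ?_, hsinf_le, hkey, hval, hdle⟩
  · apply le_antisymm (hsinf_le dstar hd_simplex)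
    apply le_csInf (Set.Nonempty.image _ ⟨ξstar, hξΞ⟩)
    rintro _ ⟨ξ, hξ, rfl⟩
    exact hval ▸ hkey ξ hξ
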